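/- Let K be a field of characteristic not 2 and let a, b, c ∈ K^×, ε₁, ε₂ ∈ {±1}. Let σ, τ be the K-automorphisms of K(x,y,z) with σ: x ↦ ε₁x, y ↦ ε₂y, z ↦ c/z and τ: x ↦ a/x, y ↦ b/y, z ↦ z. Then σ and τ are commuting involutions and the fixed field K(x,y,z)^⟨σ,τ⟩ is rational over K. Explicitly, setting t₁ = y(x² − a)/(x²y² − ab) and t₂ = x(y² − b)/(x²y² − ab), the fixed field is generated by u₃ = z + c/z together with u₁ = t₁ if ε₂ = 1 (resp. u₁ = t₁(z − c/z) if ε₂ = −1) and u₂ = t₂ if ε₁ = 1 (resp. u₂ = t₂(z − c/z) if ε₁ = −1). -/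

import Mathlib

open Polynomial in
lemma aux_quad_int {R L : Type*} [Field R] [Field L] [Algebra R L] (u v : R) (t : L)
    (h : t ^ 2 + algebraMap R L u * t + algebraMap R L v = 0) :
    IsIntegral R t ∧ (minpoly R t).natDegree ≤ 2 := by
  have hm : (X ^ 2 + C u * X + C v : R[X]).Monic := by monicity!
  have he : Polynomial.aeval t (X ^ 2 + C u * X + C v : R[X]) = 0 := by
    simp only [map_add, map_mul, map_pow, aeval_X, aeval_C]
    exact h
  refine ⟨⟨_, hm, he⟩, ?_⟩
  have h1 := minpoly.min R t hm he
  have h2 : (X ^ 2 + C u * X + C v : R[X]).natDegree ≤ 2 := by compute_degree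
  exact le_trans (Polynomial.natDegree_le_natDegree h1) h2

open IntermediateField in
lemma aux_adjoin_finrank_le {R L : Type*} [Field R] [Field L] [Algebra R L] (u v : R) (t : L)
    (h : t ^ 2 + algebraMap R L u * t + algebraMap R L v = 0) :
    FiniteDimensional R ↥(adjoin R {t}) ∧ Module.finrank R ↥(adjoin R {t}) ≤ 2 := by
  obtain ⟨hint, hdeg⟩ := aux_quad_int u v t h
  exact ⟨adjoin.finiteDimensional hint, by rw [adjoin.finrank hint]; exact hdeg⟩

open MvPolynomial IntermediateField

set_option maxHeartbeats 4000000 in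
open Classical in
theorem fixed_field_th231 (K F : Type*) [Field K] [Field F]
    [Algebra K F] [Algebra (MvPolynomial (Fin 3) K) F]
    [IsScalarTower K (MvPolynomial (Fin 3) K) F]
    [IsFractionRing (MvPolynomial (Fin 3) K) F]
    (h2 : (2 : K) ≠ 0)
    (a b c ε₁ ε₂ : K) (ha : a ≠ 0) (hb : b ≠ 0) (hc : c ≠ 0)
    (hε₁ : ε₁ = 1 ∨ ε₁ = -1) (hε₂ : ε₂ = 1 ∨ ε₂ = -1)
    (x y z : F)
    (hx : x = algebraMap (MvPolynomial (Fin 3) K) F (X 0))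
    (hy : y = algebraMap (MvPolynomial (Fin 3) K) F (X 1))
    (hz : z = algebraMap (MvPolynomial (Fin 3) K) F (X 2))
    (σ τ : F ≃ₐ[K] F)
    (hσx : σ x = algebraMap K F ε₁ * x)
    (hσy : σ y = algebraMap K F ε₂ * y)
    (hσz : σ z = algebraMap K F c / z)
    (hτx : τ x = algebraMap K F a / x)
    (hτy : τ y = algebraMap K F b / y)
    (hτz : τ z = z) :
    σ * τ = τ * σ ∧ σ * σ = 1 ∧ τ * τ = 1 ∧
    fixedField (Subgroup.closure {σ, τ}) =
      adjoin K
        {(if ε₂ = 1 then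
            y * (x ^ 2 - algebraMap K F a) / (x ^ 2 * y ^ 2 - algebraMap K F (a * b))
          else
            y * (x ^ 2 - algebraMap K F a) / (x ^ 2 * y ^ 2 - algebraMap K F (a * b)) *
              (z - algebraMap K F c / z)),
         (if ε₁ = 1 then
            x * (y ^ 2 - algebraMap K F b) / (x ^ 2 * y ^ 2 - algebraMap K F (a * b))
          else
            x * (y ^ 2 - algebraMap K F b) / (x ^ 2 * y ^ 2 - algebraMap K F (a * b)) *
              (z - algebraMap K F c / z)),
         z + algebraMap K F c / z} := by
  -- abbreviations
  set A := MvPolynomial (Fin 3) K with hA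
  have hinj : Function.Injective (algebraMap A F) := IsFractionRing.injective A F
  have hKA : ∀ k : K, algebraMap K F k = algebraMap A F (C k) := by
    intro k
    rw [IsScalarTower.algebraMap_apply K A F, algebraMap_eq]
  have hKinj : Function.Injective (algebraMap K F) := (algebraMap K F).injective
  -- nonzero facts
  have hmapne : ∀ p : A, eval (fun _ => (0:K)) p ≠ 0 → algebraMap A F p ≠ 0 := by
    intro p hp h0
    apply hp
    have : p = 0 := hinj (by simpa using h0)
    rw [this]; simp
  have hx0 : x ≠ 0 := by
    rw [hx]; intro h
    exact X_ne_zero (R := K) (0 : Fin 3) (hinj (by rw [map_zero]; exact h))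
  have hy0 : y ≠ 0 := by
    rw [hy]; intro h
    exact X_ne_zero (R := K) (1 : Fin 3) (hinj (by rw [map_zero]; exact h))
  have hz0 : z ≠ 0 := by
    rw [hz]; intro h
    exact X_ne_zero (R := K) (2 : Fin 3) (hinj (by rw [map_zero]; exact h))
  have hx2a : x ^ 2 - algebraMap K F a ≠ 0 := by
    have : x ^ 2 - algebraMap K F a = algebraMap A F (X 0 ^ 2 - C a) := by
      rw [hx, hKA]; push_cast [map_sub, map_pow]; ring
    rw [this]; exact hmapne _ (by simp [ha])
  have hy2b : y ^ 2 - algebraMap K F b ≠ 0 := by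
    have : y ^ 2 - algebraMap K F b = algebraMap A F (X 1 ^ 2 - C b) := by
      rw [hy, hKA]; push_cast [map_sub, map_pow]; ring
    rw [this]; exact hmapne _ (by simp [hb])
  have hz2c : z ^ 2 - algebraMap K F c ≠ 0 := by
    have : z ^ 2 - algebraMap K F c = algebraMap A F (X 2 ^ 2 - C c) := by
      rw [hz, hKA]; push_cast [map_sub, map_pow]; ring
    rw [this]; exact hmapne _ (by simp [hc])
  have hd : x ^ 2 * y ^ 2 - algebraMap K F (a * b) ≠ 0 := by
    have : x ^ 2 * y ^ 2 - algebraMap K F (a * b) =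
        algebraMap A F (X 0 ^ 2 * X 1 ^ 2 - C (a * b)) := by
      rw [hx, hy, hKA]; push_cast [map_sub, map_mul, map_pow]; ring
    rw [this]; exact hmapne _ (by simp [ha, hb])
  have haF : algebraMap K F a ≠ 0 := fun h => ha (hKinj (by simpa using h))
  have hbF : algebraMap K F b ≠ 0 := fun h => hb (hKinj (by simpa using h))
  have hcF : algebraMap K F c ≠ 0 := fun h => hc (hKinj (by simpa using h))
  have hw0 : z - algebraMap K F c / z ≠ 0 := by
    intro h
    apply hz2c
    field_simp at h
    rw [sq]; linear_combination h
  -- extensionality of algebra equivs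
  have hext : ∀ φ ψ : F ≃ₐ[K] F, φ x = ψ x → φ y = ψ y → φ z = ψ z → φ = ψ := by
    intro φ ψ h1 h2 h3
    rw [hx] at h1; rw [hy] at h2; rw [hz] at h3
    have e : (φ.toAlgHom.comp (IsScalarTower.toAlgHom K A F)) =
        (ψ.toAlgHom.comp (IsScalarTower.toAlgHom K A F)) := by
      apply MvPolynomial.algHom_ext
      intro i
      fin_cases i
      · exact h1
      · exact h2
      · exact h3
    have key : ∀ p : A, φ (algebraMap A F p) = ψ (algebraMap A F p) := fun p =>
      DFunLike.congr_fun e p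
    apply AlgEquiv.ext
    intro w
    obtain ⟨p, q, hq, rfl⟩ := IsFractionRing.div_surjective (A := A) w
    rw [map_div₀, map_div₀, key p, key q]
  -- epsilon squares
  have he₁ : algebraMap K F ε₁ * algebraMap K F ε₁ = 1 := by
    rw [← map_mul, ← map_one (algebraMap K F)]
    rcases hε₁ with h | h <;> rw [h] <;> norm_num
  have he₂ : algebraMap K F ε₂ * algebraMap K F ε₂ = 1 := by
    rw [← map_mul, ← map_one (algebraMap K F)]
    rcases hε₂ with h | h <;> rw [h] <;> norm_num
  -- group relations
  have hinv₁ : (algebraMap K F ε₁)⁻¹ = algebraMap K F ε₁ := inv_eq_of_mul_eq_one_right he₁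
  have hinv₂ : (algebraMap K F ε₂)⁻¹ = algebraMap K F ε₂ := inv_eq_of_mul_eq_one_right he₂
  have he₁0 : algebraMap K F ε₁ ≠ 0 := by
    intro h; rw [h, mul_zero] at he₁; exact one_ne_zero he₁.symm
  have he₂0 : algebraMap K F ε₂ ≠ 0 := by
    intro h; rw [h, mul_zero] at he₂; exact one_ne_zero he₂.symm
  have hcomm : σ * τ = τ * σ := by
    apply hext
    · rw [AlgEquiv.mul_apply, AlgEquiv.mul_apply, hτx, hσx, map_div₀, AlgEquiv.commutes, hσx,
        map_mul, AlgEquiv.commutes, hτx]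
      field_simp
      linear_combination -he₁
    · rw [AlgEquiv.mul_apply, AlgEquiv.mul_apply, hτy, hσy, map_div₀, AlgEquiv.commutes, hσy,
        map_mul, AlgEquiv.commutes, hτy]
      field_simp
      linear_combination -he₂
    · rw [AlgEquiv.mul_apply, AlgEquiv.mul_apply, hτz, hσz, map_div₀, AlgEquiv.commutes, hτz]
  have hσ2 : σ * σ = 1 := by
    apply hext
    · rw [AlgEquiv.mul_apply, AlgEquiv.one_apply, hσx, map_mul, AlgEquiv.commutes, hσx,
        ← mul_assoc, he₁, one_mul]
    · rw [AlgEquiv.mul_apply, AlgEquiv.one_apply, hσy, map_mul, AlgEquiv.commutes, hσy,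
        ← mul_assoc, he₂, one_mul]
    · rw [AlgEquiv.mul_apply, AlgEquiv.one_apply, hσz, map_div₀, AlgEquiv.commutes, hσz]
      field_simp
  have hτ2 : τ * τ = 1 := by
    apply hext
    · rw [AlgEquiv.mul_apply, AlgEquiv.one_apply, hτx, map_div₀, AlgEquiv.commutes, hτx]
      field_simp
    · rw [AlgEquiv.mul_apply, AlgEquiv.one_apply, hτy, map_div₀, AlgEquiv.commutes, hτy]
      field_simp
    · rw [AlgEquiv.mul_apply, AlgEquiv.one_apply, hτz, hτz]
  refine ⟨hcomm, hσ2, hτ2, ?_⟩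
  -- auxiliary group identities
  have hcomm' : τ * σ = σ * τ := hcomm.symm
  have hσστ : σ * (σ * τ) = τ := by rw [← mul_assoc, hσ2, one_mul]
  have hτστ : τ * (σ * τ) = σ := by rw [← mul_assoc, hcomm', mul_assoc, hτ2, mul_one]
  have hστσ : (σ * τ) * σ = τ := by rw [mul_assoc, hcomm', hσστ]
  have hσττ : (σ * τ) * τ = σ := by rw [mul_assoc, hτ2, mul_one]
  have hστστ : (σ * τ) * (σ * τ) = 1 := by rw [← mul_assoc, hστσ, hτ2]
  -- distinctness
  have hσne : σ ≠ 1 := by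
    intro h
    have h' : σ z = z := by rw [h]; rfl
    rw [hσz, div_eq_iff hz0] at h'
    exact hz2c (by rw [sq, ← h', sub_self])
  have hτne : τ ≠ 1 := by
    intro h
    have h' : τ x = x := by rw [h]; rfl
    rw [hτx, div_eq_iff hx0] at h'
    exact hx2a (by rw [sq, ← h', sub_self])
  have hστne : σ * τ ≠ 1 := by
    intro h
    have h' : (σ * τ) z = z := by rw [h]; rfl
    rw [AlgEquiv.mul_apply, hτz, hσz, div_eq_iff hz0] at h'
    exact hz2c (by rw [sq, ← h', sub_self])
  have hστ' : σ ≠ τ := by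
    intro h
    have h' : σ z = τ z := by rw [h]
    rw [hσz, hτz, div_eq_iff hz0] at h'
    exact hz2c (by rw [sq, ← h', sub_self])
  have hσ_στ : σ ≠ σ * τ := by
    intro h
    exact hτne (mul_left_cancel (a := σ) (by rw [mul_one, ← h])).symm
  have hτ_στ : τ ≠ σ * τ := by
    intro h
    rw [hcomm] at h
    exact hσne (mul_left_cancel (a := τ) (by rw [mul_one, ← h])).symm
  -- the explicit subgroup
  let G4 : Subgroup (F ≃ₐ[K] F) :=
    { carrier := {1, σ, τ, σ * τ}
      one_mem' := by left; rfl
      mul_mem' := by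
        rintro p q hp hq
        simp only [Set.mem_insert_iff, Set.mem_singleton_iff] at hp hq ⊢
        rcases hp with rfl | rfl | rfl | rfl <;> rcases hq with rfl | rfl | rfl | rfl <;>
          simp only [one_mul, mul_one, hσ2, hτ2, hσστ, hτστ, hστσ, hσττ, hστστ, hcomm'] <;>
          tauto
      inv_mem' := by
        rintro p hp
        simp only [Set.mem_insert_iff, Set.mem_singleton_iff] at hp ⊢
        rcases hp with rfl | rfl | rfl | rfl
        · left; exact inv_one
        · right; left; exact inv_eq_of_mul_eq_one_right hσ2
        · right; right; left; exact inv_eq_of_mul_eq_one_right hτ2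
        · right; right; right; exact inv_eq_of_mul_eq_one_right hστστ }
  have hG4set : (G4 : Set (F ≃ₐ[K] F)) = {1, σ, τ, σ * τ} := rfl
  have hHG4 : Subgroup.closure {σ, τ} = G4 := by
    apply le_antisymm
    · rw [Subgroup.closure_le]
      rintro g (rfl | rfl)
      · right; left; rfl
      · right; right; left; rfl
    · intro g hg
      rw [← Subgroup.mem_carrier] at hg
      rcases hg with rfl | rfl | rfl | rfl
      · exact one_mem _
      · exact Subgroup.subset_closure (by left; rfl)
      · exact Subgroup.subset_closure (by right; rfl)
      · exact mul_mem (Subgroup.subset_closure (by left; rfl))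
          (Subgroup.subset_closure (by right; rfl))
  have hncard : ({1, σ, τ, σ * τ} : Set (F ≃ₐ[K] F)).ncard = 4 := by
    rw [Set.ncard_insert_of_notMem (by simp [hσne.symm, hτne.symm, hστne.symm]),
      Set.ncard_insert_of_notMem (by simp [hστ', hσ_στ]),
      Set.ncard_pair hτ_στ]
  have hfinH : ((Subgroup.closure {σ, τ} : Subgroup (F ≃ₐ[K] F)) : Set (F ≃ₐ[K] F)).Finite := by
    rw [hHG4, hG4set]
    exact ((((Set.finite_singleton _).insert _).insert _).insert _)
  haveI hfintH : Fintype ↥(Subgroup.closure {σ, τ} : Subgroup (F ≃ₐ[K] F)) := hfinH.fintype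
  have hcard4 : Fintype.card ↥(Subgroup.closure {σ, τ} : Subgroup (F ≃ₐ[K] F)) = 4 := by
    rw [← Nat.card_eq_fintype_card]
    have : Nat.card ↥(Subgroup.closure {σ, τ} : Subgroup (F ≃ₐ[K] F)) =
        ((Subgroup.closure {σ, τ} : Subgroup (F ≃ₐ[K] F)) : Set (F ≃ₐ[K] F)).ncard :=
      Nat.card_coe_set_eq _
    rw [this, hHG4, hG4set, hncard]
  have hfixrank : Module.finrank (fixedField (Subgroup.closure {σ, τ} : Subgroup (F ≃ₐ[K] F))) F = 4 := by
    have h := FixedPoints.finrank_eq_card (↥(Subgroup.closure {σ, τ} : Subgroup (F ≃ₐ[K] F))) F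
    rw [hcard4] at h
    exact h
  -- abbreviations
  set w : F := z - algebraMap K F c / z with hwdef
  set u₃ : F := z + algebraMap K F c / z with hu₃def
  set t₁ : F := y * (x ^ 2 - algebraMap K F a) / (x ^ 2 * y ^ 2 - algebraMap K F (a * b)) with ht₁def
  set t₂ : F := x * (y ^ 2 - algebraMap K F b) / (x ^ 2 * y ^ 2 - algebraMap K F (a * b)) with ht₂def
  set u₁ : F := if ε₂ = 1 then t₁ else t₁ * w with hu₁def
  set u₂ : F := if ε₁ = 1 then t₂ else t₂ * w with hu₂def
  have habne : algebraMap K F (a * b) ≠ 0 :=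
    fun h => (mul_ne_zero ha hb) (hKinj (by rw [h, map_zero]))
  have hsq₁ : algebraMap K F ε₁ ^ 2 = 1 := by rw [sq]; exact he₁
  have hsq₂ : algebraMap K F ε₂ ^ 2 = 1 := by rw [sq]; exact he₂
  -- action on generators of E
  have hσt₁ : σ t₁ = algebraMap K F ε₂ * t₁ := by
    rw [ht₁def]
    simp only [map_div₀, map_mul, map_sub, map_pow, AlgEquiv.commutes, hσx, hσy]
    rw [mul_pow, mul_pow, hsq₁, hsq₂, one_mul, one_mul, mul_assoc, mul_div_assoc]
  have hσt₂ : σ t₂ = algebraMap K F ε₁ * t₂ := by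
    rw [ht₂def]
    simp only [map_div₀, map_mul, map_sub, map_pow, AlgEquiv.commutes, hσx, hσy]
    rw [mul_pow, mul_pow, hsq₁, hsq₂, one_mul, one_mul, mul_assoc, mul_div_assoc]
  have hσw : σ w = -w := by
    rw [hwdef]
    simp only [map_sub, map_div₀, AlgEquiv.commutes, hσz]
    field_simp
    ring
  have hσu₃ : σ u₃ = u₃ := by
    rw [hu₃def]
    simp only [map_add, map_div₀, AlgEquiv.commutes, hσz]
    field_simp
    ring
  have hD : (algebraMap K F a / x) ^ 2 * (algebraMap K F b / y) ^ 2
      - algebraMap K F (a * b) ≠ 0 := by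
    have heq : (algebraMap K F a / x) ^ 2 * (algebraMap K F b / y) ^ 2
        - algebraMap K F (a * b) =
        algebraMap K F (a * b) * (algebraMap K F (a * b) - x ^ 2 * y ^ 2) / (x ^ 2 * y ^ 2) := by
      rw [map_mul]
      field_simp
    rw [heq]
    exact div_ne_zero (mul_ne_zero habne
      (sub_ne_zero.2 (sub_ne_zero.1 hd).symm))
      (mul_ne_zero (pow_ne_zero 2 hx0) (pow_ne_zero 2 hy0))
  have hd' : x ^ 2 * y ^ 2 - algebraMap K F a * algebraMap K F b ≠ 0 := by
    rw [← map_mul]; exact hd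
  have hD' : (algebraMap K F a / x) ^ 2 * (algebraMap K F b / y) ^ 2
      - algebraMap K F a * algebraMap K F b ≠ 0 := by
    rw [← map_mul]; exact hD
  have hτt₁ : τ t₁ = t₁ := by
    rw [ht₁def]
    simp only [map_div₀, map_mul, map_sub, map_pow, AlgEquiv.commutes, hτx, hτy]
    rw [div_eq_div_iff hD' hd']
    field_simp
    ring
  have hτt₂ : τ t₂ = t₂ := by
    rw [ht₂def]
    simp only [map_div₀, map_mul, map_sub, map_pow, AlgEquiv.commutes, hτx, hτy]
    rw [div_eq_div_iff hD' hd']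
    field_simp
    ring
  have hτw : τ w = w := by
    rw [hwdef]
    simp only [map_sub, map_div₀, AlgEquiv.commutes, hτz]
  have hτu₃ : τ u₃ = u₃ := by
    rw [hu₃def]
    simp only [map_add, map_div₀, AlgEquiv.commutes, hτz]
  have hne₂' : ε₂ = -1 → ¬ (ε₂ = 1) := by
    rintro rfl h1
    exact h2 (by linear_combination -h1)
  have hne₁' : ε₁ = -1 → ¬ (ε₁ = 1) := by
    rintro rfl h1
    exact h2 (by linear_combination -h1)
  have hσu₁ : σ u₁ = u₁ := by
    rcases hε₂ with he | he
    · rw [hu₁def, if_pos he, hσt₁, he, map_one, one_mul]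
    · rw [hu₁def, if_neg (hne₂' he), map_mul, hσt₁, hσw, he]
      simp only [map_neg, map_one]
      ring
  have hσu₂ : σ u₂ = u₂ := by
    rcases hε₁ with he | he
    · rw [hu₂def, if_pos he, hσt₂, he, map_one, one_mul]
    · rw [hu₂def, if_neg (hne₁' he), map_mul, hσt₂, hσw, he]
      simp only [map_neg, map_one]
      ring
  have hτu₁ : τ u₁ = u₁ := by
    rcases hε₂ with he | he
    · rw [hu₁def, if_pos he, hτt₁]
    · rw [hu₁def, if_neg (hne₂' he), map_mul, hτt₁, hτw]
  have hτu₂ : τ u₂ = u₂ := by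
    rcases hε₁ with he | he
    · rw [hu₂def, if_pos he, hτt₂]
    · rw [hu₂def, if_neg (hne₁' he), map_mul, hτt₂, hτw]
  -- the inclusion E ≤ fixedField
  have hmemfix : ∀ u : F, σ u = u → τ u = u →
      u ∈ fixedField (Subgroup.closure {σ, τ} : Subgroup (F ≃ₐ[K] F)) := by
    intro u h1' h2'
    rintro ⟨g, hg⟩
    show g • u = u
    rw [AlgEquiv.smul_def]
    induction hg using Subgroup.closure_induction with
    | mem g hgmem => rcases hgmem with rfl | rfl; exacts [h1', h2']
    | one => rfl
    | mul g h _ _ ihg ihh => rw [AlgEquiv.mul_apply, ihh, ihg]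
    | inv g _ ih => exact (AlgEquiv.symm_apply_eq g).2 ih.symm
  have hE_le : adjoin K {u₁, u₂, u₃} ≤
      fixedField (Subgroup.closure {σ, τ} : Subgroup (F ≃ₐ[K] F)) := by
    rw [adjoin_le_iff]
    rintro u (rfl | rfl | rfl)
    · exact hmemfix _ hσu₁ hτu₁
    · exact hmemfix _ hσu₂ hτu₂
    · exact hmemfix _ hσu₃ hτu₃
  -- Part 5: degree bound [F : E] ≤ 4
  set E := adjoin K {u₁, u₂, u₃} with hEdef
  have hu₁E : u₁ ∈ E := subset_adjoin K _ (by left; rfl)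
  have hu₂E : u₂ ∈ E := subset_adjoin K _ (by right; left; rfl)
  have hu₃E : u₃ ∈ E := subset_adjoin K _ (by right; right; rfl)
  have hcE : algebraMap K F c ∈ E := E.algebraMap_mem c
  have hzq : z ^ 2 + algebraMap (↥E) F (-(⟨u₃, hu₃E⟩ : ↥E)) * z
      + algebraMap (↥E) F (⟨algebraMap K F c, hcE⟩ : ↥E) = 0 := by
    have e1 : algebraMap (↥E) F (-(⟨u₃, hu₃E⟩ : ↥E)) = -u₃ := by
      rw [RingHom.map_neg]; rfl
    have e2 : algebraMap (↥E) F (⟨algebraMap K F c, hcE⟩ : ↥E) = algebraMap K F c := rfl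
    rw [e1, e2, hu₃def]
    field_simp
    ring
  obtain ⟨hMfd, hMrank⟩ := aux_adjoin_finrank_le _ _ z hzq
  set M := adjoin (↥E) {z} with hMdef
  have hzM : z ∈ M := subset_adjoin (↥E) _ rfl
  have hEM : ∀ u : F, u ∈ E → u ∈ M := fun u hu => M.algebraMap_mem (⟨u, hu⟩ : ↥E)
  have hcM : algebraMap K F c ∈ M := hEM _ hcE
  have hwM : w ∈ M := by rw [hwdef]; exact sub_mem hzM (div_mem hcM hzM)
  have ht₁M : t₁ ∈ M := by
    rcases hε₂ with he | he
    · have e : t₁ = u₁ := by rw [hu₁def, if_pos he]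
      rw [e]; exact hEM _ hu₁E
    · have e : t₁ = u₁ / w := by rw [hu₁def, if_neg (hne₂' he), mul_div_cancel_right₀ _ hw0]
      rw [e]; exact div_mem (hEM _ hu₁E) hwM
  have ht₂M : t₂ ∈ M := by
    rcases hε₁ with he | he
    · have e : t₂ = u₂ := by rw [hu₂def, if_pos he]
      rw [e]; exact hEM _ hu₂E
    · have e : t₂ = u₂ / w := by rw [hu₂def, if_neg (hne₁' he), mul_div_cancel_right₀ _ hw0]
      rw [e]; exact div_mem (hEM _ hu₂E) hwM
  have haM : algebraMap K F a ∈ M := hEM _ (E.algebraMap_mem a)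
  have hbM : algebraMap K F b ∈ M := hEM _ (E.algebraMap_mem b)
  have ht₂0 : t₂ ≠ 0 := by
    rw [ht₂def]; exact div_ne_zero (mul_ne_zero hx0 hy2b) hd
  have hxq : t₂ * x ^ 2 + (algebraMap K F b * t₁ ^ 2 - 1 - algebraMap K F a * t₂ ^ 2) * x
      + algebraMap K F a * t₂ = 0 := by
    rw [ht₁def, ht₂def, map_mul]
    have hd'' : x ^ 2 * y ^ 2 - algebraMap K F b * algebraMap K F a ≠ 0 := by rw [mul_comm (algebraMap K F b)]; exact hd'
    field_simp
    ring
  have hγM : (algebraMap K F b * t₁ ^ 2 - 1 - algebraMap K F a * t₂ ^ 2) / t₂ ∈ M :=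
    div_mem (sub_mem (sub_mem (mul_mem hbM (pow_mem ht₁M 2)) (one_mem M))
      (mul_mem haM (pow_mem ht₂M 2))) ht₂M
  have hxq2 : x ^ 2 + algebraMap (↥M) F
      (⟨(algebraMap K F b * t₁ ^ 2 - 1 - algebraMap K F a * t₂ ^ 2) / t₂, hγM⟩ : ↥M) * x
      + algebraMap (↥M) F (⟨algebraMap K F a, haM⟩ : ↥M) = 0 := by
    have e1 : algebraMap (↥M) F
        (⟨(algebraMap K F b * t₁ ^ 2 - 1 - algebraMap K F a * t₂ ^ 2) / t₂, hγM⟩ : ↥M)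
        = (algebraMap K F b * t₁ ^ 2 - 1 - algebraMap K F a * t₂ ^ 2) / t₂ := rfl
    have e2 : algebraMap (↥M) F (⟨algebraMap K F a, haM⟩ : ↥M) = algebraMap K F a := rfl
    have e3 : x ^ 2 + (algebraMap K F b * t₁ ^ 2 - 1 - algebraMap K F a * t₂ ^ 2) / t₂ * x
        + algebraMap K F a = (t₂ * x ^ 2
          + (algebraMap K F b * t₁ ^ 2 - 1 - algebraMap K F a * t₂ ^ 2) * x
          + algebraMap K F a * t₂) / t₂ := by
      field_simp
    rw [e1, e2, e3, hxq, zero_div]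
  obtain ⟨hNfd, hNrank⟩ := aux_adjoin_finrank_le _ _ x hxq2
  set N := adjoin (↥M) {x} with hNdef
  have hxN : x ∈ N := subset_adjoin (↥M) _ rfl
  have hMN : ∀ u : F, u ∈ M → u ∈ N := fun u hu => N.algebraMap_mem (⟨u, hu⟩ : ↥M)
  have h1tx : (1 : F) - t₂ * x ≠ 0 := by
    have e : (1 : F) - t₂ * x = algebraMap K F b * (x ^ 2 - algebraMap K F a)
        / (x ^ 2 * y ^ 2 - algebraMap K F (a * b)) := by
      rw [ht₂def, map_mul]
      have hd'' : x ^ 2 * y ^ 2 - algebraMap K F b * algebraMap K F a ≠ 0 := by rw [mul_comm (algebraMap K F b)]; exact hd'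
      field_simp
      ring
    rw [e]
    exact div_ne_zero (mul_ne_zero hbF hx2a) hd
  have hyN : y ∈ N := by
    have hy' : y = algebraMap K F b * t₁ / (1 - t₂ * x) := by
      rw [eq_div_iff h1tx, ht₁def, ht₂def, map_mul]
      have hd'' : x ^ 2 * y ^ 2 - algebraMap K F b * algebraMap K F a ≠ 0 := by rw [mul_comm (algebraMap K F b)]; exact hd'
      field_simp
      ring_nf
      field_simp
      ring
    rw [hy']
    exact div_mem (mul_mem (hMN _ hbM) (hMN _ ht₁M))
      (sub_mem (one_mem N) (mul_mem (hMN _ ht₂M) hxN))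
  have hzN : z ∈ N := hMN _ hzM
  have hNtop : N = ⊤ := by
    rw [eq_top_iff]
    intro v _
    have himg : ∀ p : A, algebraMap A F p ∈ N := by
      intro p
      induction p using MvPolynomial.induction_on with
      | C k => rw [← hKA]; exact hMN _ (hEM _ (E.algebraMap_mem k))
      | add p q hp hq => rw [map_add]; exact add_mem hp hq
      | mul_X p i hp =>
        rw [map_mul]
        refine mul_mem hp ?_
        fin_cases i
        · exact (by rw [← hx]; exact hxN : algebraMap A F (X (0 : Fin 3)) ∈ N)
        · exact (by rw [← hy]; exact hyN : algebraMap A F (X (1 : Fin 3)) ∈ N)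
        · exact (by rw [← hz]; exact hzN : algebraMap A F (X (2 : Fin 3)) ∈ N)
    obtain ⟨p, q, hq, hpq⟩ := IsFractionRing.div_surjective (A := A) v
    rw [← hpq]
    exact div_mem (himg p) (himg q)
  haveI := hMfd
  haveI := hNfd
  haveI hMF : FiniteDimensional (↥M) F := by
    have h := hNfd
    rw [hNtop] at h
    exact Module.Finite.equiv (topEquiv :
      ↥(⊤ : IntermediateField (↥M) F) ≃ₐ[↥M] F).toLinearEquiv
  have hMFrank : Module.finrank (↥M) F ≤ 2 := by
    have h := hNrank
    rw [hNtop] at h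
    rwa [finrank_top'] at h
  haveI hEF : FiniteDimensional (↥E) F := FiniteDimensional.trans (↥E) (↥M) F
  have hEFrank : Module.finrank (↥E) F ≤ 4 :=
    calc Module.finrank (↥E) F
        = Module.finrank (↥E) ↥M * Module.finrank (↥M) F :=
          (Module.finrank_mul_finrank (↥E) (↥M) F).symm
      _ ≤ 2 * 2 := Nat.mul_le_mul hMrank hMFrank
      _ = 4 := rfl
  exact (eq_of_le_of_finrank_le' hE_le (by rw [hfixrank]; exact hEFrank)).symm
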